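/- arXiv:1207.4031 — 3 statements merged into one kernel-verified Lean document; each statement's English description precedes it below -/
import Mathlib

section
/- Let θ ∈ [0,1) and let (ξ_p)_{p≥0} be i.i.d. real random variables with E exp(α ξ_0²) < ∞ for some α > 0, and set X = Σ_{p=0}^∞ θ^p ξ_{−p}. Then E exp( α (1−θ)² X² ) ≤ E exp( α ξ_0² ). -/
open MeasureTheory ProbabilityTheory Filter Real

lemma summable_of_ofReal_tsum_ne_top {u : ℕ → ℝ} (hu : ∀ p, 0 ≤ u p)
    (h : (∑' p, ENNReal.ofReal (u p)) ≠ ⊤) : Summable u := by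
  have := ENNReal.summable_toReal h
  exact this.congr fun p => ENNReal.toReal_ofReal (hu p)

lemma aux_summable_abs {α θ : ℝ} (hα : 0 < α) (hθ0 : 0 ≤ θ) (hθ1 : θ < 1) {x : ℕ → ℝ}
    (h : Summable (fun p => (1 - θ) * θ ^ p * Real.exp (α * x p ^ 2))) :
    Summable (fun p => θ ^ p * |x p|) := by
  have h1θ : 0 < 1 - θ := by linarith
  have h2 : Summable (fun p : ℕ => θ ^ p * Real.exp (α * x p ^ 2) / α) := by
    have h' := h.mul_left ((1 - θ)⁻¹ * α⁻¹)
    exact h'.congr (fun p => by field_simp)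
  have hbs : Summable (fun p : ℕ => (θ ^ p + θ ^ p * Real.exp (α * x p ^ 2) / α) / 2) :=
    ((summable_geometric_of_lt_one hθ0 hθ1).add h2).div_const 2
  apply Summable.of_nonneg_of_le (fun p => by positivity) _ hbs
  intro p
  have hθp : (0:ℝ) ≤ θ ^ p := by positivity
  have habs : |x p| ≤ (1 + x p ^ 2) / 2 := by nlinarith [sq_nonneg (|x p| - 1), sq_abs (x p)]
  have hx2' : x p ^ 2 ≤ Real.exp (α * x p ^ 2) / α := by
    rw [le_div_iff₀ hα]
    nlinarith [Real.add_one_le_exp (α * x p ^ 2)]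
  have h4 : θ ^ p * x p ^ 2 ≤ θ ^ p * (Real.exp (α * x p ^ 2) / α) :=
    mul_le_mul_of_nonneg_left hx2' hθp
  have h5 : θ ^ p * (Real.exp (α * x p ^ 2) / α) = θ ^ p * Real.exp (α * x p ^ 2) / α :=
    (mul_div_assoc _ _ _).symm
  have h6 : θ ^ p * |x p| ≤ θ ^ p * ((1 + x p ^ 2) / 2) := mul_le_mul_of_nonneg_left habs hθp
  have h7 : θ ^ p * ((1 + x p ^ 2) / 2) = (θ ^ p + θ ^ p * x p ^ 2) / 2 := by ring
  linarith

lemma convexOn_exp_mul_sq {c : ℝ} (hc : 0 < c) :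
    ConvexOn ℝ Set.univ (fun t : ℝ => Real.exp (c * t ^ 2)) := by
  have hf : ConvexOn ℝ Set.univ (fun t : ℝ => c * t ^ 2) := by
    simpa [smul_eq_mul] using
      ((Even.convexOn_pow (even_two) : ConvexOn ℝ Set.univ fun x : ℝ => x ^ 2).smul hc.le)
  have himg : (fun t : ℝ => c * t ^ 2) '' Set.univ = Set.Ici 0 := by
    ext y
    simp only [Set.image_univ, Set.mem_range, Set.mem_Ici]
    constructor
    · rintro ⟨t, rfl⟩; positivity
    · intro hy
      refine ⟨Real.sqrt (y / c), ?_⟩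
      rw [Real.sq_sqrt (by positivity)]
      field_simp
  exact (convexOn_exp.subset (Set.subset_univ _) (by rw [himg]; exact convex_Ici 0)).comp hf
    (Real.exp_monotone.monotoneOn _)

lemma key_jensen {α θ : ℝ} (hα : 0 < α) (hθ0 : 0 ≤ θ) (hθ1 : θ < 1) (x : ℕ → ℝ) :
    ENNReal.ofReal (Real.exp (α * (1 - θ) ^ 2 * (∑' p, θ ^ p * x p) ^ 2))
      ≤ ∑' p, ENNReal.ofReal ((1 - θ) * θ ^ p * Real.exp (α * x p ^ 2)) := by
  set w : ℕ → ℝ := fun p => (1 - θ) * θ ^ p with hw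
  have h1θ : 0 < 1 - θ := by linarith
  have hwpos : ∀ p, 0 ≤ w p := fun p => by positivity
  have hwsum : Summable w := (summable_geometric_of_lt_one hθ0 hθ1).mul_left _
  have hw1 : ∑' p, w p = 1 := by
    rw [hw, tsum_mul_left, tsum_geometric_of_lt_one hθ0 hθ1]
    field_simp
  by_cases hS : (∑' p, ENNReal.ofReal ((1 - θ) * θ ^ p * Real.exp (α * x p ^ 2))) = ⊤
  · exact hS ▸ le_top
  -- real summability facts
  have hu : Summable (fun p => (1 - θ) * θ ^ p * Real.exp (α * x p ^ 2)) :=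
    summable_of_ofReal_tsum_ne_top (fun p => by positivity) hS
  have habs : Summable (fun p => θ ^ p * |x p|) := aux_summable_abs hα hθ0 hθ1 hu
  have hv : Summable (fun p => θ ^ p * x p) := by
    rw [← summable_abs_iff]
    exact habs.congr fun p => by rw [abs_mul, abs_pow, abs_of_nonneg hθ0]
  -- the weighted measure on ℕ
  set μ : Measure ℕ := Measure.sum (fun p => ENNReal.ofReal (w p) • Measure.dirac p) with hμ
  have hμs : ∀ s : Set ℕ, μ s = ∑' p, ENNReal.ofReal (w p) * s.indicator 1 p := by
    intro s
    rw [hμ, Measure.sum_apply _ (MeasurableSet.of_discrete)]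
    simp [Measure.smul_apply, Measure.dirac_apply' _ (MeasurableSet.of_discrete)]
  have hμsingle : ∀ a : ℕ, μ {a} = ENNReal.ofReal (w a) := by
    intro a
    rw [hμs]
    rw [tsum_eq_single a]
    · simp
    · intro b hb; simp [Set.indicator_of_notMem, hb]
  have : IsProbabilityMeasure μ := by
    constructor
    rw [hμs]
    simp only [Set.indicator_univ, Pi.one_apply, mul_one]
    rw [← ENNReal.ofReal_tsum_of_nonneg hwpos hwsum, hw1, ENNReal.ofReal_one]
  have hlint : ∀ g : ℕ → ENNReal, ∫⁻ a, g a ∂μ = ∑' p, ENNReal.ofReal (w p) * g p := by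
    intro g
    rw [hμ, lintegral_sum_measure]
    congr 1
    ext p
    rw [lintegral_smul_measure, lintegral_dirac, smul_eq_mul]
  -- integrability of x wrt μ
  have hintx : Integrable x μ := by
    refine ⟨measurable_from_top.aestronglyMeasurable, ?_⟩
    rw [HasFiniteIntegral, hlint]
    have heq : ∀ p, ENNReal.ofReal (w p) * ‖x p‖ₑ = ENNReal.ofReal (w p * |x p|) := by
      intro p
      rw [ENNReal.ofReal_mul (hwpos p), ← ofReal_norm, Real.norm_eq_abs]
    rw [tsum_congr heq, ← ENNReal.ofReal_tsum_of_nonneg (fun p => by positivity)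
      ((habs.mul_left (1 - θ)).congr fun p => by rw [hw]; ring)]
    exact ENNReal.ofReal_lt_top
  have hintφ : Integrable (fun a : ℕ => Real.exp (α * x a ^ 2)) μ := by
    refine ⟨measurable_from_top.aestronglyMeasurable, ?_⟩
    rw [HasFiniteIntegral, hlint]
    have heq : ∀ p, ENNReal.ofReal (w p) * ‖Real.exp (α * x p ^ 2)‖ₑ
        = ENNReal.ofReal (w p * Real.exp (α * x p ^ 2)) := by
      intro p
      rw [ENNReal.ofReal_mul (hwpos p), ← ofReal_norm, Real.norm_eq_abs,
        abs_of_nonneg (Real.exp_nonneg _)]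
    rw [tsum_congr heq, ← ENNReal.ofReal_tsum_of_nonneg (fun p => by positivity)
      (hu.congr fun p => by rw [hw])]
    exact ENNReal.ofReal_lt_top
  -- compute the two integrals
  have hintx_eq : ∫ a, x a ∂μ = (1 - θ) * ∑' p, θ ^ p * x p := by
    rw [integral_countable' hintx]
    have : ∀ a : ℕ, μ.real {a} • x a = (1 - θ) * (θ ^ a * x a) := by
      intro a
      rw [measureReal_def, hμsingle, ENNReal.toReal_ofReal (hwpos a), smul_eq_mul, hw]
      ring
    rw [tsum_congr this, tsum_mul_left]
  have hintφ_eq : ∫ a, Real.exp (α * x a ^ 2) ∂μ = ∑' p, w p * Real.exp (α * x p ^ 2) := by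
    rw [integral_countable' hintφ]
    exact tsum_congr fun a => by
      rw [measureReal_def, hμsingle, ENNReal.toReal_ofReal (hwpos a), smul_eq_mul]
  -- Jensen
  have hjen := (convexOn_exp_mul_sq hα).map_integral_le (continuous_exp.comp
    (by continuity)).continuousOn isClosed_univ
    (Filter.Eventually.of_forall fun _ => Set.mem_univ _) hintx hintφ
  rw [hintx_eq, hintφ_eq] at hjen
  have hrw : Real.exp (α * ((1 - θ) * ∑' p, θ ^ p * x p) ^ 2)
      = Real.exp (α * (1 - θ) ^ 2 * (∑' p, θ ^ p * x p) ^ 2) := by congr 1; ring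
  calc ENNReal.ofReal (Real.exp (α * (1 - θ) ^ 2 * (∑' p, θ ^ p * x p) ^ 2))
      ≤ ENNReal.ofReal (∑' p, w p * Real.exp (α * x p ^ 2)) := by
        apply ENNReal.ofReal_le_ofReal
        rw [← hrw]
        exact hjen
    _ = ∑' p, ENNReal.ofReal ((1 - θ) * θ ^ p * Real.exp (α * x p ^ 2)) := by
        rw [ENNReal.ofReal_tsum_of_nonneg (fun p => by positivity)
          (hu.congr fun p => by rw [hw])]

theorem exp_moment_bound_stationary_solution
    {Ω : Type*} [MeasureSpace Ω] [IsProbabilityMeasure (ℙ : Measure Ω)]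
    (ξ : ℤ → Ω → ℝ)
    (hmeas : ∀ k, Measurable (ξ k))
    (hindep : iIndepFun ξ ℙ)
    (hident : ∀ k, IdentDistrib (ξ k) (ξ 0) ℙ ℙ)
    (α : ℝ) (hα : 0 < α)
    (hgauss : Integrable (fun ω => Real.exp (α * (ξ 0 ω) ^ 2)) ℙ)
    (θ : ℝ) (hθ : θ ∈ Set.Ico (0 : ℝ) 1)
    (X : Ω → ℝ)
    (hX : ∀ ω, X ω = ∑' p : ℕ, θ ^ p * ξ (-(p : ℤ)) ω) :
    𝔼[fun ω => Real.exp (α * (1 - θ) ^ 2 * (X ω) ^ 2)] ≤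
      𝔼[fun ω => Real.exp (α * (ξ 0 ω) ^ 2)] := by
  obtain ⟨hθ0, hθ1⟩ := hθ
  have h1θ : 0 < 1 - θ := by linarith
  -- the common lintegral
  set L : ENNReal := ∫⁻ ω, ENNReal.ofReal (Real.exp (α * (ξ 0 ω) ^ 2)) ∂ℙ with hLdef
  have hg : Measurable (fun t : ℝ => ENNReal.ofReal (Real.exp (α * t ^ 2))) := by
    apply ENNReal.measurable_ofReal.comp
    exact (Real.continuous_exp.comp (by continuity)).measurable
  have hLk : ∀ k : ℤ, ∫⁻ ω, ENNReal.ofReal (Real.exp (α * (ξ k ω) ^ 2)) ∂ℙ = L := by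
    intro k
    rw [hLdef, ← lintegral_map hg (hmeas k), ← lintegral_map hg (hmeas 0), (hident k).map_eq]
  have hLne : L ≠ ⊤ := by
    have := hgauss.2
    rw [HasFiniteIntegral] at this
    have heq : ∀ ω, ENNReal.ofReal (Real.exp (α * (ξ 0 ω) ^ 2))
        = ‖Real.exp (α * (ξ 0 ω) ^ 2)‖ₑ := by
      intro ω
      rw [← ofReal_norm, Real.norm_eq_abs, abs_of_nonneg (Real.exp_nonneg _)]
    rw [hLdef]
    simp_rw [heq]
    exact this.ne
  -- measurability of each term
  have hterm_meas : ∀ p : ℕ, Measurable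
      (fun ω => ENNReal.ofReal ((1 - θ) * θ ^ p * Real.exp (α * (ξ (-(p : ℤ)) ω) ^ 2))) := by
    intro p
    exact ENNReal.measurable_ofReal.comp (measurable_const.mul
      (Real.measurable_exp.comp (measurable_const.mul ((hmeas _).pow_const 2))))
  -- the RHS sum, pointwise
  set G : Ω → ENNReal := fun ω => ∑' p : ℕ,
    ENNReal.ofReal ((1 - θ) * θ ^ p * Real.exp (α * (ξ (-(p : ℤ)) ω) ^ 2)) with hGdef
  have hGmeas : Measurable G := Measurable.ennreal_tsum hterm_meas
  have hGint : ∫⁻ ω, G ω ∂ℙ = L := by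
    rw [hGdef]
    rw [lintegral_tsum (fun p => (hterm_meas p).aemeasurable)]
    have hterm : ∀ p : ℕ, ∫⁻ ω, ENNReal.ofReal ((1 - θ) * θ ^ p
        * Real.exp (α * (ξ (-(p : ℤ)) ω) ^ 2)) ∂ℙ = ENNReal.ofReal ((1 - θ) * θ ^ p) * L := by
      intro p
      have : ∀ ω, ENNReal.ofReal ((1 - θ) * θ ^ p * Real.exp (α * (ξ (-(p : ℤ)) ω) ^ 2))
          = ENNReal.ofReal ((1 - θ) * θ ^ p)
            * ENNReal.ofReal (Real.exp (α * (ξ (-(p : ℤ)) ω) ^ 2)) := by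
        intro ω
        rw [ENNReal.ofReal_mul (by positivity)]
      simp_rw [this]
      have hm : Measurable fun ω => ENNReal.ofReal (Real.exp (α * (ξ (-(p : ℤ)) ω) ^ 2)) :=
        hg.comp (hmeas _)
      rw [lintegral_const_mul _ hm, hLk]
    rw [tsum_congr hterm, ENNReal.tsum_mul_right]
    have : (∑' p : ℕ, ENNReal.ofReal ((1 - θ) * θ ^ p)) = 1 := by
      rw [← ENNReal.ofReal_tsum_of_nonneg (fun p => by positivity)
        ((summable_geometric_of_lt_one hθ0 hθ1).mul_left _), tsum_mul_left,
        tsum_geometric_of_lt_one hθ0 hθ1]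
      rw [mul_inv_cancel₀ (by linarith), ENNReal.ofReal_one]
    rw [this, one_mul]
  -- pointwise bound
  have hpt : ∀ ω, ENNReal.ofReal (Real.exp (α * (1 - θ) ^ 2 * (X ω) ^ 2)) ≤ G ω := by
    intro ω
    rw [hX ω, hGdef]
    exact key_jensen hα hθ0 hθ1 (fun p => ξ (-(p : ℤ)) ω)
  -- LHS lintegral
  set LL : ENNReal := ∫⁻ ω, ENNReal.ofReal (Real.exp (α * (1 - θ) ^ 2 * (X ω) ^ 2)) ∂ℙ with hLLdef
  have hLLle : LL ≤ L := by
    rw [hLLdef, ← hGint]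
    exact lintegral_mono hpt
  -- a.e. measurability of X
  have hXmeas : AEMeasurable X ℙ := by
    have hae : ∀ᵐ ω ∂ℙ, G ω < ⊤ := ae_lt_top hGmeas (by rw [hGint]; exact hLne)
    apply aemeasurable_of_tendsto_metrizable_ae' (f := fun n ω => ∑ p ∈ Finset.range n,
      θ ^ p * ξ (-(p : ℤ)) ω)
    · intro n
      exact (Finset.measurable_sum _ fun p _ => (measurable_const.mul (hmeas _))).aemeasurable
    · filter_upwards [hae] with ω hω
      have hu : Summable (fun p : ℕ => (1 - θ) * θ ^ p * Real.exp (α * (ξ (-(p : ℤ)) ω) ^ 2)) :=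
        summable_of_ofReal_tsum_ne_top (fun p => by positivity) hω.ne
      have habs := aux_summable_abs hα hθ0 hθ1 hu
      have hv : Summable (fun p : ℕ => θ ^ p * ξ (-(p : ℤ)) ω) := by
        rw [← summable_abs_iff]
        exact habs.congr fun p => by rw [abs_mul, abs_pow, abs_of_nonneg hθ0]
      have := hv.hasSum.tendsto_sum_nat
      rw [← hX ω] at this
      exact this
  -- convert expectations to lintegrals
  have hlhs : 𝔼[fun ω => Real.exp (α * (1 - θ) ^ 2 * (X ω) ^ 2)] = LL.toReal := by
    rw [hLLdef]
    apply integral_eq_lintegral_of_nonneg_ae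
    · exact Filter.Eventually.of_forall fun ω => Real.exp_nonneg _
    · have hφm : Measurable fun t : ℝ => Real.exp (α * (1 - θ) ^ 2 * t ^ 2) :=
        Real.measurable_exp.comp (measurable_const.mul (measurable_id.pow_const 2))
      exact (hφm.comp_aemeasurable hXmeas).aestronglyMeasurable
  have hrhs : 𝔼[fun ω => Real.exp (α * (ξ 0 ω) ^ 2)] = L.toReal := by
    rw [hLdef]
    apply integral_eq_lintegral_of_nonneg_ae
    · exact Filter.Eventually.of_forall fun ω => Real.exp_nonneg _
    · exact hgauss.1
  rw [hlhs, hrhs]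
  exact ENNReal.toReal_mono hLne hLLle
end

section
/- For 1 ≤ l ≤ M and integers k > i ≥ 1, E(U_{k,l,m,n} U_{i,l,m,n}) = θ_n^{2l} (E ξ_0²)² · ( 1_{A₁} + 1_{A₂} Σ_{q=0}^{m−1−2l} θ_n^{2q} ), where A₁ denotes the condition i + l > k and A₂ the condition i + l = k (the indicators are 1 if the condition holds and 0 otherwise). -/
open MeasureTheory ProbabilityTheory Filter Real

open scoped ENNReal

set_option linter.unusedSectionVars false
set_option maxHeartbeats 1000000

section Helpers

variable {Ω : Type*} [MeasureSpace Ω] [IsProbabilityMeasure (ℙ : Measure Ω)]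
    {ξ : ℤ → Ω → ℝ}

private lemma half_eq4 : (2:ℝ≥0∞)⁻¹ = 4⁻¹ + 4⁻¹ := by
  rw [← ENNReal.ofReal_ofNat 2, ← ENNReal.ofReal_ofNat 4, ← ENNReal.ofReal_inv_of_pos (by norm_num),
    ← ENNReal.ofReal_inv_of_pos (by norm_num), ← ENNReal.ofReal_add (by norm_num) (by norm_num)]
  norm_num

private lemma one_eq2 : (1:ℝ≥0∞) = 2⁻¹ + 2⁻¹ := by
  rw [← ENNReal.ofReal_one, ← ENNReal.ofReal_ofNat 2, ← ENNReal.ofReal_inv_of_pos (by norm_num),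
    ← ENNReal.ofReal_add (by norm_num) (by norm_num)]
  norm_num

variable (hmeas : ∀ k, Measurable (ξ k))
  (hindep : iIndepFun ξ ℙ)
  (hident : ∀ k, IdentDistrib (ξ k) (ξ 0) ℙ ℙ)
  (hcentered : 𝔼[ξ 0] = 0)
  (hL4 : MemLp (ξ 0) 4 ℙ)

include hmeas hindep hident hcentered hL4

lemma xiL4 (a : ℤ) : MemLp (ξ a) 4 ℙ := (hident a).symm.memLp_snd hL4

lemma xiL2 (a : ℤ) : MemLp (ξ a) 2 ℙ :=
  (xiL4 hmeas hindep hident hcentered hL4 a).mono_exponent (by norm_num)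

lemma xiInt (a : ℤ) : Integrable (ξ a) ℙ :=
  (xiL4 hmeas hindep hident hcentered hL4 a).integrable (by norm_num)

lemma mulL2 (a b : ℤ) : MemLp (fun ω => ξ a ω * ξ b ω) 2 ℙ :=
  (xiL4 hmeas hindep hident hcentered hL4 b).smul (xiL4 hmeas hindep hident hcentered hL4 a)
    (hpqr := ⟨half_eq4.symm⟩)

lemma mulInt (a b : ℤ) : Integrable (fun ω => ξ a ω * ξ b ω) ℙ :=
  (mulL2 hmeas hindep hident hcentered hL4 a b).integrable one_le_two

lemma mul3Int (a b c : ℤ) : Integrable (fun ω => ξ a ω * ξ b ω * ξ c ω) ℙ := by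
  have h : MemLp (fun ω => ξ a ω * ξ b ω * ξ c ω) 1 ℙ :=
    (xiL2 hmeas hindep hident hcentered hL4 c).smul (mulL2 hmeas hindep hident hcentered hL4 a b)
      (hpqr := ⟨by rw [inv_one]; exact one_eq2.symm⟩)
  exact h.integrable le_rfl

lemma mul4Int (a b c d : ℤ) : Integrable (fun ω => ξ a ω * ξ b ω * ξ c ω * ξ d ω) ℙ := by
  have h : MemLp (fun ω => (ξ a ω * ξ b ω) * (ξ c ω * ξ d ω)) 1 ℙ :=
    (mulL2 hmeas hindep hident hcentered hL4 c d).smul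
      (mulL2 hmeas hindep hident hcentered hL4 a b)
      (hpqr := ⟨by rw [inv_one]; exact one_eq2.symm⟩)
  exact (h.integrable le_rfl).congr (Filter.Eventually.of_forall fun ω => by ring)

lemma Exi (a : ℤ) : ∫ ω, ξ a ω = 0 := by
  rw [(hident a).integral_eq]; exact hcentered

lemma Exisq (a : ℤ) : ∫ ω, ξ a ω * ξ a ω = 𝔼[fun ω => (ξ 0 ω) ^ 2] := by
  have h := ((hident a).comp (measurable_id.mul measurable_id)).integral_eq
  simp only [Function.comp, id, Pi.mul_apply] at h
  rw [h]
  congr 1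
  ext ω
  ring

lemma indep_single_triple {a b c d : ℤ} (hab : a ≠ b) (hac : a ≠ c) (had : a ≠ d) :
    IndepFun (ξ a) (fun ω => ξ b ω * ξ c ω * ξ d ω) ℙ := by
  classical
  have h := hindep.indepFun_finset {a} ({b, c, d} : Finset ℤ)
    (by simp [Finset.disjoint_left, hab, hac, had]) hmeas
  have h2 := h.comp (φ := fun v : (({a} : Finset ℤ) : Type) → ℝ => v ⟨a, by simp⟩)
    (ψ := fun v : ((({b, c, d} : Finset ℤ) : Type)) → ℝ =>
      v ⟨b, by simp⟩ * v ⟨c, by simp⟩ * v ⟨d, by simp⟩)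
    (show Measurable (fun v : (({a} : Finset ℤ) : Type) → ℝ => v ⟨a, by simp⟩) from
      measurable_pi_apply _)
    (by
      apply Measurable.mul
      apply Measurable.mul
      all_goals apply measurable_pi_apply)
  exact h2

lemma e2 {a b : ℤ} (hab : a ≠ b) : ∫ ω, ξ a ω * ξ b ω = 0 := by
  have h := (hindep.indepFun hab).integral_fun_mul_eq_mul_integral
    (xiInt hmeas hindep hident hcentered hL4 a).aestronglyMeasurable (xiInt hmeas hindep hident hcentered hL4 b).aestronglyMeasurable
  rw [Exi hmeas hindep hident hcentered hL4, zero_mul] at h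
  exact h

lemma zero4 {a b c d : ℤ} (hab : a ≠ b) (hac : a ≠ c) (had : a ≠ d) :
    ∫ ω, ξ a ω * ξ b ω * ξ c ω * ξ d ω = 0 := by
  have h := (indep_single_triple hmeas hindep hident hcentered hL4
    hab hac had).integral_fun_mul_eq_mul_integral
    (xiInt hmeas hindep hident hcentered hL4 a).aestronglyMeasurable (mul3Int hmeas hindep hident hcentered hL4 b c d).aestronglyMeasurable
  rw [Exi hmeas hindep hident hcentered hL4, zero_mul] at h
  have e : (fun ω => ξ a ω * ξ b ω * ξ c ω * ξ d ω)
      = fun ω => ξ a ω * (ξ b ω * ξ c ω * ξ d ω) := funext fun ω => by ring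
  rw [e]; exact h

lemma pair22 {a b : ℤ} (hab : a ≠ b) :
    ∫ ω, ξ a ω * ξ a ω * (ξ b ω * ξ b ω) = (𝔼[fun ω => (ξ 0 ω) ^ 2]) ^ 2 := by
  have hi : IndepFun (fun ω => ξ a ω * ξ a ω) (fun ω => ξ b ω * ξ b ω) ℙ :=
    (hindep.indepFun hab).comp (measurable_id.mul measurable_id) (measurable_id.mul measurable_id)
  have h := hi.integral_fun_mul_eq_mul_integral (mulInt hmeas hindep hident hcentered hL4 a a).aestronglyMeasurable
    (mulInt hmeas hindep hident hcentered hL4 b b).aestronglyMeasurable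
  rw [Exisq hmeas hindep hident hcentered hL4, Exisq hmeas hindep hident hcentered hL4,
    ← pow_two] at h
  exact h

lemma e31 {a b : ℤ} (hab : a ≠ b) : ∫ ω, ξ a ω * ξ a ω * ξ a ω * ξ b ω = 0 := by
  have hi : IndepFun (fun ω => ξ a ω * ξ a ω * ξ a ω) (ξ b) ℙ :=
    (hindep.indepFun hab).comp ((measurable_id.mul measurable_id).mul measurable_id) measurable_id
  have h := hi.integral_fun_mul_eq_mul_integral (mul3Int hmeas hindep hident hcentered hL4 a a a).aestronglyMeasurable
    (xiInt hmeas hindep hident hcentered hL4 b).aestronglyMeasurable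
  rw [Exi hmeas hindep hident hcentered hL4, mul_zero] at h
  exact h

lemma intsum2 (s : Finset ℕ) (c : ℕ → ℝ) (f g : ℕ → ℤ) :
    Integrable (fun ω => ∑ j ∈ s, c j * ξ (f j) ω * ξ (g j) ω) ℙ := by
  apply integrable_finset_sum
  intro j _
  exact ((mulInt hmeas hindep hident hcentered hL4 (f j) (g j)).const_mul (c j)).congr
    (Filter.Eventually.of_forall fun ω => by ring)

lemma Esum2 (s : Finset ℕ) (c : ℕ → ℝ) (f g : ℕ → ℤ) :
    ∫ ω, ∑ j ∈ s, c j * ξ (f j) ω * ξ (g j) ω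
      = ∑ j ∈ s, c j * ∫ ω, ξ (f j) ω * ξ (g j) ω := by
  rw [integral_finset_sum s (fun j _ =>
    ((mulInt hmeas hindep hident hcentered hL4 (f j) (g j)).const_mul (c j)).congr
      (Filter.Eventually.of_forall fun ω => by ring))]
  refine Finset.sum_congr rfl fun j _ => ?_
  rw [show (fun ω => c j * ξ (f j) ω * ξ (g j) ω)
      = fun ω => c j * (ξ (f j) ω * ξ (g j) ω) from funext fun ω => by ring,
    integral_const_mul _ _]

lemma intmulsum2 (s t : Finset ℕ) (c d : ℕ → ℝ) (f g f' g' : ℕ → ℤ) :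
    Integrable (fun ω => (∑ j ∈ s, c j * ξ (f j) ω * ξ (g j) ω)
      * (∑ j' ∈ t, d j' * ξ (f' j') ω * ξ (g' j') ω)) ℙ := by
  have e : (fun ω => (∑ j ∈ s, c j * ξ (f j) ω * ξ (g j) ω)
        * (∑ j' ∈ t, d j' * ξ (f' j') ω * ξ (g' j') ω))
      = fun ω => ∑ j ∈ s, ∑ j' ∈ t,
          (c j * d j') * (ξ (f j) ω * ξ (g j) ω * ξ (f' j') ω * ξ (g' j') ω) := by
    funext ω
    rw [Finset.sum_mul_sum]
    exact Finset.sum_congr rfl fun j _ => Finset.sum_congr rfl fun j' _ => by ring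
  rw [e]
  apply integrable_finset_sum
  intro j _
  apply integrable_finset_sum
  intro j' _
  exact ((mul4Int hmeas hindep hident hcentered hL4 (f j) (g j) (f' j') (g' j')).const_mul
    (c j * d j')).congr (Filter.Eventually.of_forall fun ω => by ring)

lemma Emulsum2 (s t : Finset ℕ) (c d : ℕ → ℝ) (f g f' g' : ℕ → ℤ) :
    ∫ ω, (∑ j ∈ s, c j * ξ (f j) ω * ξ (g j) ω)
        * (∑ j' ∈ t, d j' * ξ (f' j') ω * ξ (g' j') ω)
      = ∑ j ∈ s, ∑ j' ∈ t,
          (c j * d j') * ∫ ω, ξ (f j) ω * ξ (g j) ω * ξ (f' j') ω * ξ (g' j') ω := by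
  have e : (fun ω => (∑ j ∈ s, c j * ξ (f j) ω * ξ (g j) ω)
        * (∑ j' ∈ t, d j' * ξ (f' j') ω * ξ (g' j') ω))
      = fun ω => ∑ j ∈ s, ∑ j' ∈ t,
          (c j * d j') * (ξ (f j) ω * ξ (g j) ω * ξ (f' j') ω * ξ (g' j') ω) := by
    funext ω
    rw [Finset.sum_mul_sum]
    exact Finset.sum_congr rfl fun j _ => Finset.sum_congr rfl fun j' _ => by ring
  rw [e]
  rw [integral_finset_sum s (fun j _ => integrable_finset_sum _ (fun j' _ =>
    ((mul4Int hmeas hindep hident hcentered hL4 (f j) (g j) (f' j') (g' j')).const_mul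
      (c j * d j')).congr (Filter.Eventually.of_forall fun ω => by ring)))]
  refine Finset.sum_congr rfl fun j _ => ?_
  rw [integral_finset_sum t (fun j' _ =>
    ((mul4Int hmeas hindep hident hcentered hL4 (f j) (g j) (f' j') (g' j')).const_mul
      (c j * d j')).congr (Filter.Eventually.of_forall fun ω => by ring))]
  refine Finset.sum_congr rfl fun j' _ => ?_
  rw [integral_const_mul _ _]

end Helpers

private lemma double_ite_sum {s t : Finset ℕ} {a b : ℕ} (v : ℝ) (ha : a ∈ s) (hb : b ∈ t) :
    ∑ j ∈ s, ∑ j' ∈ t, (if j = a ∧ j' = b then v else 0) = v := by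
  rw [Finset.sum_eq_single_of_mem a ha]
  · rw [Finset.sum_eq_single_of_mem b hb]
    · simp
    · intro c _ hcb; simp [hcb]
  · intro c _ hca
    apply Finset.sum_eq_zero
    intro c' _
    simp [hca]

theorem U_same_lag_covariance
    {Ω : Type*} [MeasureSpace Ω] [IsProbabilityMeasure (ℙ : Measure Ω)]
    (ξ : ℤ → Ω → ℝ)
    (hmeas : ∀ k, Measurable (ξ k))
    (hindep : iIndepFun ξ ℙ)
    (hident : ∀ k, IdentDistrib (ξ k) (ξ 0) ℙ ℙ)
    (hcentered : 𝔼[ξ 0] = 0)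
    (hL4 : MemLp (ξ 0) 4 ℙ)
    (θ : ℝ) (hθ : θ ∈ Set.Ico (0 : ℝ) 1)
    (M m : ℕ) (hm : 2 * M < m)
    (U : ℕ → ℕ → Ω → ℝ)
    (hU : ∀ k l ω, U k l ω =
      ∑ j ∈ Finset.Icc 1 (m - 1), θ ^ j * ξ ((k : ℤ) + l - j) ω * ξ (k : ℤ) ω +
      ∑ j ∈ Finset.Icc 1 (m - 1), θ ^ j * ξ ((k : ℤ) + l) ω * ξ ((k : ℤ) - j) ω +
      ξ ((k : ℤ) + l) ω * ξ (k : ℤ) ω - θ ^ l * 𝔼[fun ω => (ξ 0 ω) ^ 2])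
    (l : ℕ) (hl1 : 1 ≤ l) (hlM : l ≤ M)
    (i k : ℕ) (hi : 1 ≤ i) (hik : i < k) :
    𝔼[fun ω => U k l ω * U i l ω] =
      θ ^ (2 * l) * (𝔼[fun ω => (ξ 0 ω) ^ 2]) ^ 2 *
        ((if k < i + l then (1 : ℝ) else 0) +
          (if i + l = k then (1 : ℝ) else 0) *
            ∑ q ∈ Finset.range (m - 2 * l), θ ^ (2 * q)) := by
  classical
  obtain ⟨hθ0, hθ1⟩ := hθ
  have hlm : 2 * l < m := by omega
  set σ2 := 𝔼[fun ω => (ξ 0 ω) ^ 2] with hσ2def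
  set I0 := Finset.Icc 0 (m - 1) with hI0def
  set I1 := Finset.Icc 1 (m - 1) with hI1def
  have hPform : ∀ (r : ℕ) (ω : Ω), U r l ω =
      (∑ j ∈ I0, θ ^ j * ξ ((r : ℤ) + l - j) ω * ξ (r : ℤ) ω) +
      (∑ j ∈ I1, θ ^ j * ξ ((r : ℤ) + l) ω * ξ ((r : ℤ) - j) ω) - θ ^ l * σ2 := by
    intro r ω
    rw [hU]
    have hins : I0 = insert 0 I1 := by
      rw [hI0def, hI1def]; ext x; simp only [Finset.mem_Icc, Finset.mem_insert]; omega
    rw [hins, Finset.sum_insert (by rw [hI1def]; simp)]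
    simp only [pow_zero, Nat.cast_zero, sub_zero, one_mul]
    ring
  -- integrability
  have hQint : ∀ r : ℕ,
      Integrable (fun ω => ∑ j ∈ I0, θ ^ j * ξ ((r:ℤ) + l - j) ω * ξ (r:ℤ) ω) ℙ := fun r =>
    intsum2 hmeas hindep hident hcentered hL4 I0 (fun j => θ ^ j)
      (fun j => (r:ℤ) + l - j) (fun _ => (r:ℤ))
  have hRint : ∀ r : ℕ,
      Integrable (fun ω => ∑ j ∈ I1, θ ^ j * ξ ((r:ℤ) + l) ω * ξ ((r:ℤ) - j) ω) ℙ := fun r =>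
    intsum2 hmeas hindep hident hcentered hL4 I1 (fun j => θ ^ j)
      (fun _ => (r:ℤ) + l) (fun j => (r:ℤ) - j)
  -- means of the two pieces
  have hEQ : ∀ r : ℕ,
      ∫ ω, (∑ j ∈ I0, θ ^ j * ξ ((r:ℤ) + l - j) ω * ξ (r:ℤ) ω) = θ ^ l * σ2 := by
    intro r
    have h1 : ∫ ω, (∑ j ∈ I0, θ ^ j * ξ ((r:ℤ) + l - j) ω * ξ (r:ℤ) ω)
        = ∑ j ∈ I0, θ ^ j * ∫ ω, ξ ((r:ℤ) + l - j) ω * ξ (r:ℤ) ω :=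
      Esum2 hmeas hindep hident hcentered hL4 I0 (fun j => θ ^ j)
        (fun j => (r:ℤ) + l - j) (fun _ => (r:ℤ))
    rw [h1]
    have h2 : ∀ j ∈ I0, θ ^ j * ∫ ω, ξ ((r:ℤ) + l - j) ω * ξ (r:ℤ) ω
        = if j = l then θ ^ l * σ2 else 0 := by
      intro j hj
      by_cases hjl : j = l
      · rw [if_pos hjl, show ((r:ℤ) + ↑l - ↑j) = (r:ℤ) from by omega,
          Exisq hmeas hindep hident hcentered hL4, ← hσ2def, hjl]
      · rw [if_neg hjl, e2 hmeas hindep hident hcentered hL4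
          (show (r:ℤ) + ↑l - ↑j ≠ (r:ℤ) by omega), mul_zero]
    rw [Finset.sum_congr rfl h2, Finset.sum_ite_eq' I0 l (fun _ => θ ^ l * σ2),
      if_pos (by rw [hI0def]; simp only [Finset.mem_Icc]; omega)]
  have hER : ∀ r : ℕ,
      ∫ ω, (∑ j ∈ I1, θ ^ j * ξ ((r:ℤ) + l) ω * ξ ((r:ℤ) - j) ω) = 0 := by
    intro r
    have h1 : ∫ ω, (∑ j ∈ I1, θ ^ j * ξ ((r:ℤ) + l) ω * ξ ((r:ℤ) - j) ω)
        = ∑ j ∈ I1, θ ^ j * ∫ ω, ξ ((r:ℤ) + l) ω * ξ ((r:ℤ) - j) ω :=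
      Esum2 hmeas hindep hident hcentered hL4 I1 (fun j => θ ^ j)
        (fun _ => (r:ℤ) + l) (fun j => (r:ℤ) - j)
    rw [h1]
    apply Finset.sum_eq_zero
    intro j hj
    rw [hI1def, Finset.mem_Icc] at hj
    rw [e2 hmeas hindep hident hcentered hL4
      (show (r:ℤ) + ↑l ≠ (r:ℤ) - ↑j by omega), mul_zero]
  -- pointwise evaluation of the 4-fold integrals, class QQ
  have hQQ : ∀ j ∈ I0, ∀ j' ∈ I0,
      (∫ ω, ξ ((k:ℤ) + l - j) ω * ξ (k:ℤ) ω * ξ ((i:ℤ) + l - j') ω * ξ (i:ℤ) ω)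
        = if j = l ∧ j' = l then σ2 ^ 2
          else if k ≤ i + l ∧ j = k + l - i ∧ j' = i + l - k then σ2 ^ 2 else 0 := by
    intro j hj j' hj'
    rw [hI0def, Finset.mem_Icc] at hj hj'
    by_cases h1 : j = l ∧ j' = l
    · obtain ⟨h1a, h1b⟩ := h1
      rw [if_pos ⟨h1a, h1b⟩,
        show ((k:ℤ) + ↑l - ↑j) = (k:ℤ) from by omega,
        show ((i:ℤ) + ↑l - ↑j') = (i:ℤ) from by omega,
        show (fun ω => ξ (k:ℤ) ω * ξ (k:ℤ) ω * ξ (i:ℤ) ω * ξ (i:ℤ) ω)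
          = fun ω => ξ (k:ℤ) ω * ξ (k:ℤ) ω * (ξ (i:ℤ) ω * ξ (i:ℤ) ω) from funext fun ω => by ring,
        pair22 hmeas hindep hident hcentered hL4 (show (k:ℤ) ≠ (i:ℤ) by omega), hσ2def]
    · rw [if_neg h1]
      by_cases hjl : j = l
      · have hj'l : j' ≠ l := fun h => h1 ⟨hjl, h⟩
        rw [if_neg (by omega), show ((k:ℤ) + ↑l - ↑j) = (k:ℤ) from by omega]
        by_cases hc : ((i:ℤ) + ↑l - ↑j') = (k:ℤ)
        · rw [hc]
          exact e31 hmeas hindep hident hcentered hL4 (show (k:ℤ) ≠ (i:ℤ) by omega)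
        · rw [show (fun ω => ξ (k:ℤ) ω * ξ (k:ℤ) ω * ξ ((i:ℤ) + ↑l - ↑j') ω * ξ (i:ℤ) ω)
            = fun ω => ξ ((i:ℤ) + ↑l - ↑j') ω * ξ (k:ℤ) ω * ξ (k:ℤ) ω * ξ (i:ℤ) ω
            from funext fun ω => by ring]
          exact zero4 hmeas hindep hident hcentered hL4 hc hc
            (show (i:ℤ) + ↑l - ↑j' ≠ (i:ℤ) by omega)
      · by_cases hj'l : j' = l
        · rw [if_neg (by omega), show ((i:ℤ) + ↑l - ↑j') = (i:ℤ) from by omega]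
          by_cases ha : ((k:ℤ) + ↑l - ↑j) = (i:ℤ)
          · rw [ha, show (fun ω => ξ (i:ℤ) ω * ξ (k:ℤ) ω * ξ (i:ℤ) ω * ξ (i:ℤ) ω)
              = fun ω => ξ (i:ℤ) ω * ξ (i:ℤ) ω * ξ (i:ℤ) ω * ξ (k:ℤ) ω from funext fun ω => by ring]
            exact e31 hmeas hindep hident hcentered hL4 (show (i:ℤ) ≠ (k:ℤ) by omega)
          · exact zero4 hmeas hindep hident hcentered hL4
              (show (k:ℤ) + ↑l - ↑j ≠ (k:ℤ) by omega) ha ha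
        · by_cases hai : ((k:ℤ) + ↑l - ↑j) = (i:ℤ)
          · by_cases hck : ((i:ℤ) + ↑l - ↑j') = (k:ℤ)
            · rw [if_pos (show k ≤ i + l ∧ j = k + l - i ∧ j' = i + l - k from
                  ⟨by omega, by omega, by omega⟩), hai, hck,
                show (fun ω => ξ (i:ℤ) ω * ξ (k:ℤ) ω * ξ (k:ℤ) ω * ξ (i:ℤ) ω)
                  = fun ω => ξ (k:ℤ) ω * ξ (k:ℤ) ω * (ξ (i:ℤ) ω * ξ (i:ℤ) ω)
                  from funext fun ω => by ring,
                pair22 hmeas hindep hident hcentered hL4 (show (k:ℤ) ≠ (i:ℤ) by omega), hσ2def]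
            · rw [if_neg (by omega), hai,
                show (fun ω => ξ (i:ℤ) ω * ξ (k:ℤ) ω * ξ ((i:ℤ) + ↑l - ↑j') ω * ξ (i:ℤ) ω)
                  = fun ω => ξ (k:ℤ) ω * ξ (i:ℤ) ω * ξ ((i:ℤ) + ↑l - ↑j') ω * ξ (i:ℤ) ω
                  from funext fun ω => by ring]
              exact zero4 hmeas hindep hident hcentered hL4 (show (k:ℤ) ≠ (i:ℤ) by omega)
                (fun h => hck h.symm) (show (k:ℤ) ≠ (i:ℤ) by omega)
          · rw [if_neg (by omega)]
            by_cases hac : ((k:ℤ) + ↑l - ↑j) = ((i:ℤ) + ↑l - ↑j')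
            · rw [← hac,
                show (fun ω => ξ ((k:ℤ) + ↑l - ↑j) ω * ξ (k:ℤ) ω * ξ ((k:ℤ) + ↑l - ↑j) ω * ξ (i:ℤ) ω)
                  = fun ω => ξ (k:ℤ) ω * ξ ((k:ℤ) + ↑l - ↑j) ω * ξ ((k:ℤ) + ↑l - ↑j) ω * ξ (i:ℤ) ω
                  from funext fun ω => by ring]
              exact zero4 hmeas hindep hident hcentered hL4
                (show (k:ℤ) ≠ (k:ℤ) + ↑l - ↑j by omega)
                (show (k:ℤ) ≠ (k:ℤ) + ↑l - ↑j by omega)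
                (show (k:ℤ) ≠ (i:ℤ) by omega)
            · exact zero4 hmeas hindep hident hcentered hL4
                (show (k:ℤ) + ↑l - ↑j ≠ (k:ℤ) by omega) hac hai
  -- pointwise evaluation, class QR
  have hQR : ∀ j ∈ I0, ∀ j' ∈ I1,
      (∫ ω, ξ ((k:ℤ) + l - j) ω * ξ (k:ℤ) ω * ξ ((i:ℤ) + l) ω * ξ ((i:ℤ) - j') ω)
        = if i + l = k ∧ j = 2 * l + j' then σ2 ^ 2 else 0 := by
    intro j hj j' hj'
    rw [hI0def, Finset.mem_Icc] at hj
    rw [hI1def, Finset.mem_Icc] at hj'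
    by_cases hA2 : (i:ℤ) + ↑l = (k:ℤ)
    · rw [hA2]
      by_cases had : ((k:ℤ) + ↑l - ↑j) = ((i:ℤ) - ↑j')
      · rw [if_pos ⟨by omega, by omega⟩, had,
          show (fun ω => ξ ((i:ℤ) - ↑j') ω * ξ (k:ℤ) ω * ξ (k:ℤ) ω * ξ ((i:ℤ) - ↑j') ω)
            = fun ω => ξ (k:ℤ) ω * ξ (k:ℤ) ω * (ξ ((i:ℤ) - ↑j') ω * ξ ((i:ℤ) - ↑j') ω)
            from funext fun ω => by ring,
          pair22 hmeas hindep hident hcentered hL4 (show (k:ℤ) ≠ (i:ℤ) - ↑j' by omega), hσ2def]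
      · by_cases hak : ((k:ℤ) + ↑l - ↑j) = (k:ℤ)
        · rw [if_neg (by omega), hak]
          exact e31 hmeas hindep hident hcentered hL4 (show (k:ℤ) ≠ (i:ℤ) - ↑j' by omega)
        · rw [if_neg (by omega)]
          exact zero4 hmeas hindep hident hcentered hL4 hak hak had
    · rw [if_neg (by omega)]
      by_cases hb : ((k:ℤ) + ↑l - ↑j) = ((i:ℤ) + ↑l)
      · rw [show (fun ω => ξ ((k:ℤ) + ↑l - ↑j) ω * ξ (k:ℤ) ω * ξ ((i:ℤ) + ↑l) ω * ξ ((i:ℤ) - ↑j') ω)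
          = fun ω => ξ (k:ℤ) ω * ξ ((k:ℤ) + ↑l - ↑j) ω * ξ ((i:ℤ) + ↑l) ω * ξ ((i:ℤ) - ↑j') ω
          from funext fun ω => by ring]
        exact zero4 hmeas hindep hident hcentered hL4
          (show (k:ℤ) ≠ (k:ℤ) + ↑l - ↑j by omega)
          (show (k:ℤ) ≠ (i:ℤ) + ↑l by omega)
          (show (k:ℤ) ≠ (i:ℤ) - ↑j' by omega)
      · rw [show (fun ω => ξ ((k:ℤ) + ↑l - ↑j) ω * ξ (k:ℤ) ω * ξ ((i:ℤ) + ↑l) ω * ξ ((i:ℤ) - ↑j') ω)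
          = fun ω => ξ ((i:ℤ) + ↑l) ω * ξ ((k:ℤ) + ↑l - ↑j) ω * ξ (k:ℤ) ω * ξ ((i:ℤ) - ↑j') ω
          from funext fun ω => by ring]
        exact zero4 hmeas hindep hident hcentered hL4
          (fun h => hb h.symm)
          (show (i:ℤ) + ↑l ≠ (k:ℤ) by omega)
          (show (i:ℤ) + ↑l ≠ (i:ℤ) - ↑j' by omega)
  -- class values
  have hQQval : ∫ ω, (∑ j ∈ I0, θ ^ j * ξ ((k:ℤ) + l - j) ω * ξ (k:ℤ) ω)
      * (∑ j' ∈ I0, θ ^ j' * ξ ((i:ℤ) + l - j') ω * ξ (i:ℤ) ω)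
      = θ ^ (2 * l) * σ2 ^ 2 + (if k ≤ i + l then θ ^ (2 * l) * σ2 ^ 2 else 0) := by
    have step1 : ∫ ω, (∑ j ∈ I0, θ ^ j * ξ ((k:ℤ) + l - j) ω * ξ (k:ℤ) ω)
        * (∑ j' ∈ I0, θ ^ j' * ξ ((i:ℤ) + l - j') ω * ξ (i:ℤ) ω)
        = ∑ j ∈ I0, ∑ j' ∈ I0, (θ ^ j * θ ^ j')
            * ∫ ω, ξ ((k:ℤ) + l - j) ω * ξ (k:ℤ) ω * ξ ((i:ℤ) + l - j') ω * ξ (i:ℤ) ω :=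
      Emulsum2 hmeas hindep hident hcentered hL4 I0 I0 (fun j => θ ^ j) (fun j => θ ^ j)
        (fun j => (k:ℤ) + l - j) (fun _ => (k:ℤ)) (fun j' => (i:ℤ) + l - j') (fun _ => (i:ℤ))
    rw [step1]
    have step2 : ∀ j ∈ I0, ∀ j' ∈ I0, (θ ^ j * θ ^ j')
          * (∫ ω, ξ ((k:ℤ) + l - j) ω * ξ (k:ℤ) ω * ξ ((i:ℤ) + l - j') ω * ξ (i:ℤ) ω)
        = (if j = l ∧ j' = l then θ ^ (2 * l) * σ2 ^ 2 else 0)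
          + (if k ≤ i + l then
              (if j = k + l - i ∧ j' = i + l - k then θ ^ (2 * l) * σ2 ^ 2 else 0) else 0) := by
      intro j hj j' hj'
      rw [hQQ j hj j' hj']
      rw [hI0def, Finset.mem_Icc] at hj hj'
      by_cases h1 : j = l ∧ j' = l
      · obtain ⟨h1a, h1b⟩ := h1
        rw [if_pos ⟨h1a, h1b⟩, if_pos ⟨h1a, h1b⟩]
        have h2 : ¬(j = k + l - i ∧ j' = i + l - k) := by omega
        rw [if_neg h2, ite_self, add_zero, ← pow_add, show j + j' = 2 * l from by omega]
      · rw [if_neg h1, if_neg h1, zero_add]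
        by_cases h2 : k ≤ i + l ∧ j = k + l - i ∧ j' = i + l - k
        · obtain ⟨hp, h2a, h2b⟩ := h2
          rw [if_pos ⟨hp, h2a, h2b⟩, if_pos hp, if_pos ⟨h2a, h2b⟩, ← pow_add,
            show j + j' = 2 * l from by omega]
        · rw [if_neg h2, mul_zero]
          by_cases hp : k ≤ i + l
          · rw [if_pos hp, if_neg (fun hc => h2 ⟨hp, hc⟩)]
          · rw [if_neg hp]
    rw [Finset.sum_congr rfl (fun j hj => Finset.sum_congr rfl (fun j' hj' => step2 j hj j' hj'))]
    simp only [Finset.sum_add_distrib]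
    have m1 : l ∈ I0 := by rw [hI0def]; simp only [Finset.mem_Icc]; omega
    rw [double_ite_sum (θ ^ (2 * l) * σ2 ^ 2) m1 m1]
    congr 1
    by_cases hp : k ≤ i + l
    · simp only [if_pos hp]
      rw [double_ite_sum (θ ^ (2 * l) * σ2 ^ 2)
        (by rw [hI0def]; simp only [Finset.mem_Icc]; omega)
        (by rw [hI0def]; simp only [Finset.mem_Icc]; omega)]
    · simp only [if_neg hp, Finset.sum_const_zero]
  have hQRval : ∫ ω, (∑ j ∈ I0, θ ^ j * ξ ((k:ℤ) + l - j) ω * ξ (k:ℤ) ω)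
      * (∑ j' ∈ I1, θ ^ j' * ξ ((i:ℤ) + l) ω * ξ ((i:ℤ) - j') ω)
      = if i + l = k then ∑ q ∈ Finset.Icc 1 (m - 1 - 2 * l), θ ^ (2 * l + 2 * q) * σ2 ^ 2
        else 0 := by
    have step1 : ∫ ω, (∑ j ∈ I0, θ ^ j * ξ ((k:ℤ) + l - j) ω * ξ (k:ℤ) ω)
        * (∑ j' ∈ I1, θ ^ j' * ξ ((i:ℤ) + l) ω * ξ ((i:ℤ) - j') ω)
        = ∑ j ∈ I0, ∑ j' ∈ I1, (θ ^ j * θ ^ j')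
            * ∫ ω, ξ ((k:ℤ) + l - j) ω * ξ (k:ℤ) ω * ξ ((i:ℤ) + l) ω * ξ ((i:ℤ) - j') ω :=
      Emulsum2 hmeas hindep hident hcentered hL4 I0 I1 (fun j => θ ^ j) (fun j => θ ^ j)
        (fun j => (k:ℤ) + l - j) (fun _ => (k:ℤ)) (fun _ => (i:ℤ) + l) (fun j' => (i:ℤ) - j')
    rw [step1]
    have step2 : ∀ j ∈ I0, ∀ j' ∈ I1, (θ ^ j * θ ^ j')
          * (∫ ω, ξ ((k:ℤ) + l - j) ω * ξ (k:ℤ) ω * ξ ((i:ℤ) + l) ω * ξ ((i:ℤ) - j') ω)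
        = if i + l = k then (if j = 2 * l + j' then θ ^ j * θ ^ j' * σ2 ^ 2 else 0) else 0 := by
      intro j hj j' hj'
      rw [hQR j hj j' hj']
      by_cases hA2 : i + l = k
      · by_cases hj2 : j = 2 * l + j'
        · rw [if_pos ⟨hA2, hj2⟩, if_pos hA2, if_pos hj2, mul_assoc]
        · rw [if_neg (fun h => hj2 h.2), if_pos hA2, if_neg hj2, mul_zero]
      · rw [if_neg (fun h => hA2 h.1), if_neg hA2, mul_zero]
    rw [Finset.sum_congr rfl (fun j hj => Finset.sum_congr rfl (fun j' hj' => step2 j hj j' hj'))]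
    by_cases hA2 : i + l = k
    · simp only [if_pos hA2]
      rw [Finset.sum_comm]
      have step3 : ∀ j' ∈ I1,
          (∑ j ∈ I0, if j = 2 * l + j' then θ ^ j * θ ^ j' * σ2 ^ 2 else 0)
          = if 2 * l + j' ∈ I0 then θ ^ (2 * l + j') * θ ^ j' * σ2 ^ 2 else 0 := by
        intro j' _
        rw [Finset.sum_ite_eq' I0 (2 * l + j') (fun j => θ ^ j * θ ^ j' * σ2 ^ 2)]
      rw [Finset.sum_congr rfl step3, ← Finset.sum_filter]
      have hfil : I1.filter (fun j' => 2 * l + j' ∈ I0) = Finset.Icc 1 (m - 1 - 2 * l) := by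
        rw [hI1def, hI0def]
        ext x
        simp only [Finset.mem_filter, Finset.mem_Icc]
        omega
      rw [hfil]
      refine Finset.sum_congr rfl fun q hq => ?_
      rw [← pow_add, show 2 * l + q + q = 2 * l + 2 * q from by ring]
    · simp only [if_neg hA2, Finset.sum_const_zero]
  have hRQval : ∫ ω, (∑ j ∈ I1, θ ^ j * ξ ((k:ℤ) + l) ω * ξ ((k:ℤ) - j) ω)
      * (∑ j' ∈ I0, θ ^ j' * ξ ((i:ℤ) + l - j') ω * ξ (i:ℤ) ω) = 0 := by
    have step1 : ∫ ω, (∑ j ∈ I1, θ ^ j * ξ ((k:ℤ) + l) ω * ξ ((k:ℤ) - j) ω)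
        * (∑ j' ∈ I0, θ ^ j' * ξ ((i:ℤ) + l - j') ω * ξ (i:ℤ) ω)
        = ∑ j ∈ I1, ∑ j' ∈ I0, (θ ^ j * θ ^ j')
            * ∫ ω, ξ ((k:ℤ) + l) ω * ξ ((k:ℤ) - j) ω * ξ ((i:ℤ) + l - j') ω * ξ (i:ℤ) ω :=
      Emulsum2 hmeas hindep hident hcentered hL4 I1 I0 (fun j => θ ^ j) (fun j => θ ^ j)
        (fun _ => (k:ℤ) + l) (fun j => (k:ℤ) - j) (fun j' => (i:ℤ) + l - j') (fun _ => (i:ℤ))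
    rw [step1]
    apply Finset.sum_eq_zero
    intro j hj
    apply Finset.sum_eq_zero
    intro j' hj'
    rw [hI1def, Finset.mem_Icc] at hj
    rw [hI0def, Finset.mem_Icc] at hj'
    rw [zero4 hmeas hindep hident hcentered hL4
      (show (k:ℤ) + ↑l ≠ (k:ℤ) - ↑j by omega)
      (show (k:ℤ) + ↑l ≠ (i:ℤ) + ↑l - ↑j' by omega)
      (show (k:ℤ) + ↑l ≠ (i:ℤ) by omega), mul_zero]
  have hRRval : ∫ ω, (∑ j ∈ I1, θ ^ j * ξ ((k:ℤ) + l) ω * ξ ((k:ℤ) - j) ω)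
      * (∑ j' ∈ I1, θ ^ j' * ξ ((i:ℤ) + l) ω * ξ ((i:ℤ) - j') ω) = 0 := by
    have step1 : ∫ ω, (∑ j ∈ I1, θ ^ j * ξ ((k:ℤ) + l) ω * ξ ((k:ℤ) - j) ω)
        * (∑ j' ∈ I1, θ ^ j' * ξ ((i:ℤ) + l) ω * ξ ((i:ℤ) - j') ω)
        = ∑ j ∈ I1, ∑ j' ∈ I1, (θ ^ j * θ ^ j')
            * ∫ ω, ξ ((k:ℤ) + l) ω * ξ ((k:ℤ) - j) ω * ξ ((i:ℤ) + l) ω * ξ ((i:ℤ) - j') ω :=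
      Emulsum2 hmeas hindep hident hcentered hL4 I1 I1 (fun j => θ ^ j) (fun j => θ ^ j)
        (fun _ => (k:ℤ) + l) (fun j => (k:ℤ) - j) (fun _ => (i:ℤ) + l) (fun j' => (i:ℤ) - j')
    rw [step1]
    apply Finset.sum_eq_zero
    intro j hj
    apply Finset.sum_eq_zero
    intro j' hj'
    rw [hI1def, Finset.mem_Icc] at hj hj'
    rw [zero4 hmeas hindep hident hcentered hL4
      (show (k:ℤ) + ↑l ≠ (k:ℤ) - ↑j by omega)
      (show (k:ℤ) + ↑l ≠ (i:ℤ) + ↑l by omega)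
      (show (k:ℤ) + ↑l ≠ (i:ℤ) - ↑j' by omega), mul_zero]
  -- expand the product and integrate
  have expand : (fun ω => U k l ω * U i l ω) = fun ω =>
      ((∑ j ∈ I0, θ ^ j * ξ ((k:ℤ) + l - j) ω * ξ (k:ℤ) ω)
          * (∑ j' ∈ I0, θ ^ j' * ξ ((i:ℤ) + l - j') ω * ξ (i:ℤ) ω)
        + (∑ j ∈ I0, θ ^ j * ξ ((k:ℤ) + l - j) ω * ξ (k:ℤ) ω)
          * (∑ j' ∈ I1, θ ^ j' * ξ ((i:ℤ) + l) ω * ξ ((i:ℤ) - j') ω)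
        + ((∑ j ∈ I1, θ ^ j * ξ ((k:ℤ) + l) ω * ξ ((k:ℤ) - j) ω)
          * (∑ j' ∈ I0, θ ^ j' * ξ ((i:ℤ) + l - j') ω * ξ (i:ℤ) ω)
        + (∑ j ∈ I1, θ ^ j * ξ ((k:ℤ) + l) ω * ξ ((k:ℤ) - j) ω)
          * (∑ j' ∈ I1, θ ^ j' * ξ ((i:ℤ) + l) ω * ξ ((i:ℤ) - j') ω)))
      - ((θ ^ l * σ2) * ((∑ j' ∈ I0, θ ^ j' * ξ ((i:ℤ) + l - j') ω * ξ (i:ℤ) ω)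
          + (∑ j' ∈ I1, θ ^ j' * ξ ((i:ℤ) + l) ω * ξ ((i:ℤ) - j') ω))
        + ((θ ^ l * σ2) * ((∑ j ∈ I0, θ ^ j * ξ ((k:ℤ) + l - j) ω * ξ (k:ℤ) ω)
          + (∑ j ∈ I1, θ ^ j * ξ ((k:ℤ) + l) ω * ξ ((k:ℤ) - j) ω))
          - (θ ^ l * σ2) * (θ ^ l * σ2))) := by
    funext ω
    rw [hPform k ω, hPform i ω]
    ring
  have intQQ : Integrable (fun ω => (∑ j ∈ I0, θ ^ j * ξ ((k:ℤ) + l - j) ω * ξ (k:ℤ) ω)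
      * (∑ j' ∈ I0, θ ^ j' * ξ ((i:ℤ) + l - j') ω * ξ (i:ℤ) ω)) ℙ :=
    intmulsum2 hmeas hindep hident hcentered hL4 I0 I0 (fun j => θ ^ j) (fun j => θ ^ j)
      (fun j => (k:ℤ) + l - j) (fun _ => (k:ℤ)) (fun j' => (i:ℤ) + l - j') (fun _ => (i:ℤ))
  have intQR : Integrable (fun ω => (∑ j ∈ I0, θ ^ j * ξ ((k:ℤ) + l - j) ω * ξ (k:ℤ) ω)
      * (∑ j' ∈ I1, θ ^ j' * ξ ((i:ℤ) + l) ω * ξ ((i:ℤ) - j') ω)) ℙ :=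
    intmulsum2 hmeas hindep hident hcentered hL4 I0 I1 (fun j => θ ^ j) (fun j => θ ^ j)
      (fun j => (k:ℤ) + l - j) (fun _ => (k:ℤ)) (fun _ => (i:ℤ) + l) (fun j' => (i:ℤ) - j')
  have intRQ : Integrable (fun ω => (∑ j ∈ I1, θ ^ j * ξ ((k:ℤ) + l) ω * ξ ((k:ℤ) - j) ω)
      * (∑ j' ∈ I0, θ ^ j' * ξ ((i:ℤ) + l - j') ω * ξ (i:ℤ) ω)) ℙ :=
    intmulsum2 hmeas hindep hident hcentered hL4 I1 I0 (fun j => θ ^ j) (fun j => θ ^ j)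
      (fun _ => (k:ℤ) + l) (fun j => (k:ℤ) - j) (fun j' => (i:ℤ) + l - j') (fun _ => (i:ℤ))
  have intRR : Integrable (fun ω => (∑ j ∈ I1, θ ^ j * ξ ((k:ℤ) + l) ω * ξ ((k:ℤ) - j) ω)
      * (∑ j' ∈ I1, θ ^ j' * ξ ((i:ℤ) + l) ω * ξ ((i:ℤ) - j') ω)) ℙ :=
    intmulsum2 hmeas hindep hident hcentered hL4 I1 I1 (fun j => θ ^ j) (fun j => θ ^ j)
      (fun _ => (k:ℤ) + l) (fun j => (k:ℤ) - j) (fun _ => (i:ℤ) + l) (fun j' => (i:ℤ) - j')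
  have intA1 : Integrable (fun ω =>
      (∑ j ∈ I0, θ ^ j * ξ ((k:ℤ) + l - j) ω * ξ (k:ℤ) ω)
        * (∑ j' ∈ I0, θ ^ j' * ξ ((i:ℤ) + l - j') ω * ξ (i:ℤ) ω)
      + (∑ j ∈ I0, θ ^ j * ξ ((k:ℤ) + l - j) ω * ξ (k:ℤ) ω)
        * (∑ j' ∈ I1, θ ^ j' * ξ ((i:ℤ) + l) ω * ξ ((i:ℤ) - j') ω)) ℙ := intQQ.add intQR
  have intA2 : Integrable (fun ω =>
      (∑ j ∈ I1, θ ^ j * ξ ((k:ℤ) + l) ω * ξ ((k:ℤ) - j) ω)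
        * (∑ j' ∈ I0, θ ^ j' * ξ ((i:ℤ) + l - j') ω * ξ (i:ℤ) ω)
      + (∑ j ∈ I1, θ ^ j * ξ ((k:ℤ) + l) ω * ξ ((k:ℤ) - j) ω)
        * (∑ j' ∈ I1, θ ^ j' * ξ ((i:ℤ) + l) ω * ξ ((i:ℤ) - j') ω)) ℙ := intRQ.add intRR
  have intA : Integrable (fun ω =>
      ((∑ j ∈ I0, θ ^ j * ξ ((k:ℤ) + l - j) ω * ξ (k:ℤ) ω)
        * (∑ j' ∈ I0, θ ^ j' * ξ ((i:ℤ) + l - j') ω * ξ (i:ℤ) ω)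
      + (∑ j ∈ I0, θ ^ j * ξ ((k:ℤ) + l - j) ω * ξ (k:ℤ) ω)
        * (∑ j' ∈ I1, θ ^ j' * ξ ((i:ℤ) + l) ω * ξ ((i:ℤ) - j') ω))
      + ((∑ j ∈ I1, θ ^ j * ξ ((k:ℤ) + l) ω * ξ ((k:ℤ) - j) ω)
        * (∑ j' ∈ I0, θ ^ j' * ξ ((i:ℤ) + l - j') ω * ξ (i:ℤ) ω)
      + (∑ j ∈ I1, θ ^ j * ξ ((k:ℤ) + l) ω * ξ ((k:ℤ) - j) ω)
        * (∑ j' ∈ I1, θ ^ j' * ξ ((i:ℤ) + l) ω * ξ ((i:ℤ) - j') ω))) ℙ := intA1.add intA2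
  have intSi : Integrable (fun ω => (∑ j ∈ I0, θ ^ j * ξ ((i:ℤ) + l - j) ω * ξ (i:ℤ) ω)
      + (∑ j ∈ I1, θ ^ j * ξ ((i:ℤ) + l) ω * ξ ((i:ℤ) - j) ω)) ℙ := (hQint i).add (hRint i)
  have intSk : Integrable (fun ω => (∑ j ∈ I0, θ ^ j * ξ ((k:ℤ) + l - j) ω * ξ (k:ℤ) ω)
      + (∑ j ∈ I1, θ ^ j * ξ ((k:ℤ) + l) ω * ξ ((k:ℤ) - j) ω)) ℙ := (hQint k).add (hRint k)
  have intB1 : Integrable (fun ω => (θ ^ l * σ2)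
      * ((∑ j ∈ I0, θ ^ j * ξ ((i:ℤ) + l - j) ω * ξ (i:ℤ) ω)
        + (∑ j ∈ I1, θ ^ j * ξ ((i:ℤ) + l) ω * ξ ((i:ℤ) - j) ω))) ℙ :=
    intSi.const_mul (θ ^ l * σ2)
  have intB2' : Integrable (fun ω => (θ ^ l * σ2)
      * ((∑ j ∈ I0, θ ^ j * ξ ((k:ℤ) + l - j) ω * ξ (k:ℤ) ω)
        + (∑ j ∈ I1, θ ^ j * ξ ((k:ℤ) + l) ω * ξ ((k:ℤ) - j) ω))) ℙ :=
    intSk.const_mul (θ ^ l * σ2)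
  have intB2 : Integrable (fun ω => (θ ^ l * σ2)
      * ((∑ j ∈ I0, θ ^ j * ξ ((k:ℤ) + l - j) ω * ξ (k:ℤ) ω)
        + (∑ j ∈ I1, θ ^ j * ξ ((k:ℤ) + l) ω * ξ ((k:ℤ) - j) ω))
      - (θ ^ l * σ2) * (θ ^ l * σ2)) ℙ := intB2'.sub (integrable_const _)
  have intB : Integrable (fun ω => (θ ^ l * σ2)
      * ((∑ j ∈ I0, θ ^ j * ξ ((i:ℤ) + l - j) ω * ξ (i:ℤ) ω)
        + (∑ j ∈ I1, θ ^ j * ξ ((i:ℤ) + l) ω * ξ ((i:ℤ) - j) ω))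
      + ((θ ^ l * σ2)
      * ((∑ j ∈ I0, θ ^ j * ξ ((k:ℤ) + l - j) ω * ξ (k:ℤ) ω)
        + (∑ j ∈ I1, θ ^ j * ξ ((k:ℤ) + l) ω * ξ ((k:ℤ) - j) ω))
      - (θ ^ l * σ2) * (θ ^ l * σ2))) ℙ := intB1.add intB2
  rw [expand]
  rw [integral_sub intA intB, integral_add intA1 intA2,
    integral_add intQQ intQR, integral_add intRQ intRR,
    integral_add intB1 intB2, integral_sub intB2' (integrable_const _),
    integral_const_mul _ _, integral_const_mul _ _,
    integral_add (hQint i) (hRint i), integral_add (hQint k) (hRint k),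
    integral_const, hQQval, hQRval, hRQval, hRRval, hEQ i, hEQ k, hER i, hER k]
  simp only [Measure.real, measure_univ, ENNReal.toReal_one, one_smul, add_zero]
  -- final algebra
  by_cases hA2 : i + l = k
  · have hA1 : ¬(k < i + l) := by omega
    have hle : k ≤ i + l := by omega
    simp only [if_pos hA2, if_neg hA1, if_pos hle]
    have hsum : ∑ q ∈ Finset.range (m - 2 * l), θ ^ (2 * q)
        = 1 + ∑ q ∈ Finset.Icc 1 (m - 1 - 2 * l), θ ^ (2 * q) := by
      rw [Finset.range_eq_Ico, Finset.sum_eq_sum_Ico_succ_bot (by omega : 0 < m - 2 * l),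
        show m - 2 * l = (m - 1 - 2 * l) + 1 from by omega, Finset.Ico_add_one_right_eq_Icc]
      norm_num
    rw [hsum]
    have hsum2 : ∑ q ∈ Finset.Icc 1 (m - 1 - 2 * l), θ ^ (2 * l + 2 * q) * σ2 ^ 2
        = (∑ q ∈ Finset.Icc 1 (m - 1 - 2 * l), θ ^ (2 * q)) * (θ ^ (2 * l) * σ2 ^ 2) := by
      rw [Finset.sum_mul]
      refine Finset.sum_congr rfl fun q hq => ?_
      rw [pow_add]
      ring
    rw [hsum2]
    ring
  · simp only [if_neg hA2]
    by_cases hA1 : k < i + l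
    · simp only [if_pos hA1, if_pos (show k ≤ i + l by omega)]
      ring
    · simp only [if_neg hA1, if_neg (show ¬ k ≤ i + l by omega)]
      ring
end

section
/- For integers 1 ≤ i < k and 1 ≤ l ≤ M, E(U_{i,0,m,n} U_{k,l,m,n}) = 0. -/
open MeasureTheory ProbabilityTheory Filter Real

theorem U_cross_covariance_zero_lag_first
    {Ω : Type*} [MeasureSpace Ω] [IsProbabilityMeasure (ℙ : Measure Ω)]
    (ξ : ℤ → Ω → ℝ)
    (hmeas : ∀ k, Measurable (ξ k))
    (hindep : iIndepFun ξ ℙ)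
    (hident : ∀ k, IdentDistrib (ξ k) (ξ 0) ℙ ℙ)
    (hcentered : 𝔼[ξ 0] = 0)
    (hL4 : MemLp (ξ 0) 4 ℙ)
    (θ : ℝ) (hθ : θ ∈ Set.Ico (0 : ℝ) 1)
    (M m : ℕ) (hm : 2 * M < m)
    (U : ℕ → ℕ → Ω → ℝ)
    (hU : ∀ k l ω, U k l ω =
      ∑ j ∈ Finset.Icc 1 (m - 1), θ ^ j * ξ ((k : ℤ) + l - j) ω * ξ (k : ℤ) ω +
      ∑ j ∈ Finset.Icc 1 (m - 1), θ ^ j * ξ ((k : ℤ) + l) ω * ξ ((k : ℤ) - j) ω +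
      ξ ((k : ℤ) + l) ω * ξ (k : ℤ) ω - θ ^ l * 𝔼[fun ω => (ξ 0 ω) ^ 2])
    (l : ℕ) (hl1 : 1 ≤ l) (hlM : l ≤ M)
    (i k : ℕ) (hi : 1 ≤ i) (hik : i < k) :
    𝔼[fun ω => U i 0 ω * U k l ω] = 0 := by
  classical
  set c : ℝ := 𝔼[fun ω => (ξ 0 ω) ^ 2] with hc
  -- basic Lᵖ facts
  have hL4a : ∀ a : ℤ, MemLp (ξ a) 4 ℙ := fun a => (hident a).symm.memLp_snd hL4
  have hL2a : ∀ a : ℤ, MemLp (ξ a) 2 ℙ := fun a =>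
    (hL4a a).mono_exponent (by norm_num)
  have mul2 : ∀ a b : ℤ, MemLp (fun ω => ξ a ω * ξ b ω) 2 ℙ := by
    intro a b
    have h := (hL4a b).smul (φ := ξ a) (hL4a a) (r := 2) (hpqr := ⟨by
      have h4 : (4 : ENNReal)⁻¹ = 2⁻¹ * 2⁻¹ := by
        rw [← ENNReal.mul_inv (by norm_num) (by norm_num)]; norm_num
      rw [h4, ← add_mul, ENNReal.inv_two_add_inv_two, one_mul]⟩)
    exact h
  have mulL1 : ∀ (f g : Ω → ℝ), MemLp f 2 ℙ → MemLp g 2 ℙ →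
      Integrable (fun ω => f ω * g ω) ℙ := by
    intro f g hf hg
    have h := hg.smul (φ := f) hf (r := 1) (hpqr := ⟨by
      rw [inv_one, ENNReal.inv_two_add_inv_two]⟩)
    rw [← memLp_one_iff_integrable]
    exact h
  have int1 : ∀ a : ℤ, Integrable (ξ a) ℙ := fun a => (hL4a a).integrable (by norm_num)
  have int2 : ∀ a b : ℤ, Integrable (fun ω => ξ a ω * ξ b ω) ℙ := fun a b =>
    mulL1 _ _ (hL2a a) (hL2a b)
  have int3 : ∀ a b e : ℤ, Integrable (fun ω => ξ a ω * ξ b ω * ξ e ω) ℙ := fun a b e =>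
    mulL1 _ _ (mul2 a b) (hL2a e)
  have int4 : ∀ a b e f : ℤ, Integrable (fun ω => ξ a ω * ξ b ω * (ξ e ω * ξ f ω)) ℙ :=
    fun a b e f => mulL1 _ _ (mul2 a b) (mul2 e f)
  -- generic splitting helpers
  have addZ : ∀ f g : Ω → ℝ, Integrable f ℙ → Integrable g ℙ →
      ∫ ω, f ω ∂ℙ = 0 → ∫ ω, g ω ∂ℙ = 0 → ∫ ω, f ω + g ω ∂ℙ = 0 := by
    intro f g hf hg h1 h2
    rw [integral_add hf hg, h1, h2, add_zero]
  have subZ : ∀ f g : Ω → ℝ, Integrable f ℙ → Integrable g ℙ →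
      ∫ ω, f ω ∂ℙ = 0 → ∫ ω, g ω ∂ℙ = 0 → ∫ ω, f ω - g ω ∂ℙ = 0 := by
    intro f g hf hg h1 h2
    rw [integral_sub hf hg, h1, h2, sub_zero]
  have sumZ : ∀ (s : Finset ℕ) (f : ℕ → Ω → ℝ), (∀ j ∈ s, Integrable (f j) ℙ) →
      (∀ j ∈ s, ∫ ω, f j ω ∂ℙ = 0) → ∫ ω, ∑ j ∈ s, f j ω ∂ℙ = 0 := by
    intro s f hint h0
    rw [integral_finset_sum s hint]
    exact Finset.sum_eq_zero h0
  have cZ : ∀ (r : ℝ) (f : Ω → ℝ), ∫ ω, f ω ∂ℙ = 0 → ∫ ω, r * f ω ∂ℙ = 0 := by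
    intro r f h
    rw [integral_const_mul r f, h, mul_zero]
  have addInt : ∀ f g : Ω → ℝ, Integrable f ℙ → Integrable g ℙ →
      Integrable (fun ω => f ω + g ω) ℙ := fun f g hf hg => hf.add hg
  have subInt : ∀ f g : Ω → ℝ, Integrable f ℙ → Integrable g ℙ →
      Integrable (fun ω => f ω - g ω) ℙ := fun f g hf hg => hf.sub hg
  -- expectations
  have E0 : ∀ a : ℤ, integral ℙ (ξ a) = 0 := fun a => (hident a).integral_eq.trans hcentered
  have Esq : ∀ a : ℤ, ∫ ω, ξ a ω * ξ a ω ∂ℙ = c := by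
    intro a
    have h : ∫ ω, ξ a ω * ξ a ω ∂ℙ = ∫ ω, ξ 0 ω * ξ 0 ω ∂ℙ :=
      ((hident a).comp (measurable_id.mul measurable_id)).integral_eq
    have h2 : ∫ ω, ξ 0 ω * ξ 0 ω ∂ℙ = ∫ ω, (ξ 0 ω) ^ 2 ∂ℙ := by
      simp only [pow_two]
    rw [h, h2]
  have EP0 : ∀ a b : ℤ, a ≠ b → ∫ ω, ξ a ω * ξ b ω ∂ℙ = 0 := by
    intro a b hab
    have h := (hindep.indepFun hab).integral_mul_eq_mul_integral (int1 a).1 (int1 b).1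
    rw [E0 a, zero_mul] at h
    exact h
  -- independence of a function of three coordinates from a fourth one
  have indepT : ∀ (a b e d : ℤ), d ≠ a → d ≠ b → d ≠ e →
      ∀ (ψ : ℝ → ℝ → ℝ → ℝ), Measurable (fun p : ℝ × ℝ × ℝ => ψ p.1 p.2.1 p.2.2) →
      IndepFun (fun ω => ψ (ξ a ω) (ξ b ω) (ξ e ω)) (ξ d) ℙ := by
    intro a b e d h1 h2 h3 ψ hψ
    have hd : Disjoint ({a, b, e} : Finset ℤ) {d} := by
      simp only [Finset.disjoint_singleton_right, Finset.mem_insert, Finset.mem_singleton]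
      push_neg
      exact ⟨h1, h2, h3⟩
    have h := hindep.indepFun_finset {a, b, e} {d} hd hmeas
    have hma : Measurable (fun v : (({a, b, e} : Finset ℤ) → ℝ) =>
        ψ (v ⟨a, by simp⟩) (v ⟨b, by simp⟩) (v ⟨e, by simp⟩)) := by
      have hinner : Measurable (fun v : (({a, b, e} : Finset ℤ) → ℝ) =>
          ((v ⟨a, by simp⟩, v ⟨b, by simp⟩, v ⟨e, by simp⟩) : ℝ × ℝ × ℝ)) :=
        (measurable_pi_apply _).prodMk
          ((measurable_pi_apply _).prodMk (measurable_pi_apply _))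
      exact hψ.comp hinner
    have hmd : Measurable (fun v : (({d} : Finset ℤ) → ℝ) => v ⟨d, by simp⟩) :=
      measurable_pi_apply _
    exact h.comp hma hmd
  -- key lemma
  have KEY : ∀ P : Ω → ℝ,
      integral ℙ P = 0 →
      Integrable P ℙ →
      (∀ e : ℤ, Integrable (fun ω => P ω * ξ e ω) ℙ) →
      (∀ e f : ℤ, Integrable (fun ω => P ω * (ξ e ω * ξ f ω)) ℙ) →
      (∀ d : ℤ, (k : ℤ) ≤ d → IndepFun P (ξ d) ℙ) →
      (∀ e d : ℤ, (k : ℤ) ≤ d → d ≠ e → IndepFun (fun ω => P ω * ξ e ω) (ξ d) ℙ) →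
      Integrable (fun ω => P ω * U k l ω) ℙ ∧
        ∫ ω, P ω * U k l ω ∂ℙ = 0 := by
    intro P hEP hPint hP2 hP4 hindP hindPe
    have zero4 : ∀ e d : ℤ, (k : ℤ) ≤ d → d ≠ e →
        ∫ ω, P ω * ξ e ω * ξ d ω ∂ℙ = 0 := by
      intro e d hd hde
      have h := (hindPe e d hd hde).integral_mul_eq_mul_integral (hP2 e).1 (int1 d).1
      rw [E0 d, mul_zero] at h
      exact h
    have zsq : ∫ ω, P ω * (ξ (k : ℤ) ω * ξ (k : ℤ) ω) ∂ℙ = 0 := by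
      have ind : IndepFun P (fun ω => ξ (k : ℤ) ω * ξ (k : ℤ) ω) ℙ :=
        (hindP (k : ℤ) le_rfl).comp measurable_id (measurable_id.mul measurable_id)
      have h := ind.integral_mul_eq_mul_integral hPint.1 (int2 k k).1
      rw [hEP, zero_mul] at h
      exact h
    have hassoc : ∀ e d : ℤ, (fun ω => P ω * (ξ e ω * ξ d ω)) =
        fun ω => P ω * ξ e ω * ξ d ω := fun e d => funext fun ω => (mul_assoc _ _ _).symm
    have hswap : ∀ (j : ℕ) (e d : ℤ), (fun ω => P ω * (θ ^ j * ξ e ω * ξ d ω)) =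
        fun ω => θ ^ j * (P ω * (ξ e ω * ξ d ω)) := fun j e d => funext fun ω => by ring
    have hrev : ∀ e d : ℤ, (fun ω => P ω * (ξ e ω * ξ d ω)) =
        fun ω => P ω * ξ d ω * ξ e ω := fun e d => funext fun ω => by ring
    have hkappa : (fun ω => P ω * (θ ^ l * c)) = fun ω => (θ ^ l * c) * P ω :=
      funext fun ω => mul_comm _ _
    have hexp : (fun ω => P ω * U k l ω) = fun ω =>
        (∑ j ∈ Finset.Icc 1 (m - 1), P ω * (θ ^ j * ξ ((k : ℤ) + l - j) ω * ξ (k : ℤ) ω) +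
         ∑ j ∈ Finset.Icc 1 (m - 1), P ω * (θ ^ j * ξ ((k : ℤ) + l) ω * ξ ((k : ℤ) - j) ω) +
         P ω * (ξ ((k : ℤ) + l) ω * ξ (k : ℤ) ω)) -
        P ω * (θ ^ l * c) := by
      funext ω
      rw [hU k l ω, mul_sub, mul_add, mul_add, Finset.mul_sum, Finset.mul_sum]
    -- integrability of the pieces
    have intP1 : ∀ (j : ℕ) (e d : ℤ),
        Integrable (fun ω => P ω * (θ ^ j * ξ e ω * ξ d ω)) ℙ := by
      intro j e d
      rw [hswap]
      exact (hP4 e d).const_mul _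
    have intS1 : Integrable (fun ω => ∑ j ∈ Finset.Icc 1 (m - 1),
        P ω * (θ ^ j * ξ ((k : ℤ) + l - j) ω * ξ (k : ℤ) ω)) ℙ :=
      integrable_finset_sum _ fun j _ => intP1 j _ _
    have intS2 : Integrable (fun ω => ∑ j ∈ Finset.Icc 1 (m - 1),
        P ω * (θ ^ j * ξ ((k : ℤ) + l) ω * ξ ((k : ℤ) - j) ω)) ℙ :=
      integrable_finset_sum _ fun j _ => intP1 j _ _
    have intT : Integrable (fun ω => P ω * (ξ ((k : ℤ) + l) ω * ξ (k : ℤ) ω)) ℙ := hP4 _ _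
    have intK : Integrable (fun ω => P ω * (θ ^ l * c)) ℙ := by
      rw [hkappa]; exact hPint.const_mul _
    constructor
    · rw [hexp]
      exact subInt _ _ (addInt _ _ (addInt _ _ intS1 intS2) intT) intK
    · rw [hexp]
      refine subZ _ _ (addInt _ _ (addInt _ _ intS1 intS2) intT) intK ?_ ?_
      · refine addZ _ _ (addInt _ _ intS1 intS2) intT ?_ ?_
        · refine addZ _ _ intS1 intS2 ?_ ?_
          · refine sumZ _ _ (fun j _ => intP1 j _ _) ?_
            intro j hj
            rw [hswap]
            refine cZ _ _ ?_
            by_cases hcase : ((k : ℤ) + l - j) = (k : ℤ)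
            · rw [hcase]
              exact zsq
            · rw [hassoc]
              exact zero4 _ _ le_rfl (Ne.symm hcase)
          · refine sumZ _ _ (fun j _ => intP1 j _ _) ?_
            intro j hj
            rw [hswap]
            refine cZ _ _ ?_
            rw [hrev]
            exact zero4 _ _ (by omega) (by omega)
        · rw [hrev]
          exact zero4 _ _ (by omega) (by omega)
      · rw [hkappa]
        exact cZ _ _ hEP
  -- measurability helpers
  have hψ1 : Measurable (fun p : ℝ × ℝ × ℝ => p.1 * p.2.1) :=
    measurable_fst.mul (measurable_fst.comp measurable_snd)
  have hψ2 : Measurable (fun p : ℝ × ℝ × ℝ => p.1 * p.2.1 * p.2.2) :=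
    hψ1.mul (measurable_snd.comp measurable_snd)
  have hψ3 : Measurable (fun p : ℝ × ℝ × ℝ => p.1 * p.2.1 - c) := hψ1.sub measurable_const
  have hψ4 : Measurable (fun p : ℝ × ℝ × ℝ => (p.1 * p.2.1 - c) * p.2.2) :=
    hψ3.mul (measurable_snd.comp measurable_snd)
  -- application 1 : P = ξ a * ξ b with a, b < k, a ≠ b
  have APP1 : ∀ a b : ℤ, a < (k : ℤ) → b < (k : ℤ) → a ≠ b →
      Integrable (fun ω => ξ a ω * ξ b ω * U k l ω) ℙ ∧
        ∫ ω, ξ a ω * ξ b ω * U k l ω ∂ℙ = 0 := by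
    intro a b ha hb hab
    exact KEY (fun ω => ξ a ω * ξ b ω) (EP0 a b hab) (int2 a b)
      (fun e => int3 a b e) (fun e f => int4 a b e f)
      (fun d hd => indepT a b b d (by omega) (by omega) (by omega)
        (fun x y _ => x * y) hψ1)
      (fun e d hd hde => indepT a b e d (by omega) (by omega) hde
        (fun x y z => x * y * z) hψ2)
  -- application 2 : P = ξ i * ξ i - c
  have EG : integral ℙ (fun ω => ξ (i : ℤ) ω * ξ (i : ℤ) ω - c) = 0 := by
    have h : integral ℙ (fun ω => ξ (i : ℤ) ω * ξ (i : ℤ) ω - c) =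
        (∫ ω, ξ (i : ℤ) ω * ξ (i : ℤ) ω ∂ℙ) - ∫ _ω, (c : ℝ) ∂ℙ :=
      integral_sub (int2 i i) (integrable_const c)
    rw [h, Esq i, integral_const]
    simp
  have APP2 : Integrable (fun ω => (ξ (i : ℤ) ω * ξ (i : ℤ) ω - c) * U k l ω) ℙ ∧
      ∫ ω, (ξ (i : ℤ) ω * ξ (i : ℤ) ω - c) * U k l ω ∂ℙ = 0 := by
    refine KEY (fun ω => ξ (i : ℤ) ω * ξ (i : ℤ) ω - c) EG ?_ ?_ ?_ ?_ ?_
    · exact subInt _ _ (int2 i i) (integrable_const c)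
    · intro e
      have hre : (fun ω => (ξ (i : ℤ) ω * ξ (i : ℤ) ω - c) * ξ e ω) =
          fun ω => ξ (i : ℤ) ω * ξ (i : ℤ) ω * ξ e ω - c * ξ e ω :=
        funext fun ω => by ring
      rw [hre]
      exact subInt _ _ (int3 i i e) ((int1 e).const_mul c)
    · intro e f
      have hre : (fun ω => (ξ (i : ℤ) ω * ξ (i : ℤ) ω - c) * (ξ e ω * ξ f ω)) =
          fun ω => ξ (i : ℤ) ω * ξ (i : ℤ) ω * (ξ e ω * ξ f ω) - c * (ξ e ω * ξ f ω) :=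
        funext fun ω => by ring
      rw [hre]
      exact subInt _ _ (int4 i i e f) ((int2 e f).const_mul c)
    · intro d hd
      exact indepT (i : ℤ) (i : ℤ) (i : ℤ) d (by omega) (by omega) (by omega)
        (fun x y _ => x * y - c) hψ3
    · intro e d hd hde
      exact indepT (i : ℤ) (i : ℤ) e d (by omega) (by omega) hde
        (fun x y z => (x * y - c) * z) hψ4
  -- main expansion
  have hexp0 : (fun ω => U i 0 ω * U k l ω) = fun ω =>
      (∑ j ∈ Finset.Icc 1 (m - 1), θ ^ j * ξ ((i : ℤ) - j) ω * ξ (i : ℤ) ω * U k l ω +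
       ∑ j ∈ Finset.Icc 1 (m - 1), θ ^ j * ξ (i : ℤ) ω * ξ ((i : ℤ) - j) ω * U k l ω) +
      (ξ (i : ℤ) ω * ξ (i : ℤ) ω - c) * U k l ω := by
    funext ω
    rw [hU i 0 ω]
    simp only [Nat.cast_zero, add_zero, pow_zero, one_mul]
    rw [sub_mul, add_mul, add_mul, add_sub_assoc, ← sub_mul, Finset.sum_mul, Finset.sum_mul]
  have hswap0 : ∀ (j : ℕ) (a b : ℤ), (fun ω => θ ^ j * ξ a ω * ξ b ω * U k l ω) =
      fun ω => θ ^ j * (ξ a ω * ξ b ω * U k l ω) := fun j a b => funext fun ω => by ring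
  have hone : ∀ (j : ℕ), j ∈ Finset.Icc 1 (m - 1) → 1 ≤ j := fun j hj =>
    (Finset.mem_Icc.mp hj).1
  rw [hexp0]
  refine addZ _ _ ?_ APP2.1 ?_ APP2.2
  · refine addInt _ _ ?_ ?_
    · refine integrable_finset_sum _ fun j hj => ?_
      rw [hswap0]
      exact ((APP1 ((i : ℤ) - j) (i : ℤ) (by omega) (by omega)
        (by have := hone j hj; omega)).1).const_mul _
    · refine integrable_finset_sum _ fun j hj => ?_
      rw [hswap0]
      exact ((APP1 (i : ℤ) ((i : ℤ) - j) (by omega) (by omega)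
        (by have := hone j hj; omega)).1).const_mul _
  · refine addZ _ _ ?_ ?_ ?_ ?_
    · refine integrable_finset_sum _ fun j hj => ?_
      rw [hswap0]
      exact ((APP1 ((i : ℤ) - j) (i : ℤ) (by omega) (by omega)
        (by have := hone j hj; omega)).1).const_mul _
    · refine integrable_finset_sum _ fun j hj => ?_
      rw [hswap0]
      exact ((APP1 (i : ℤ) ((i : ℤ) - j) (by omega) (by omega)
        (by have := hone j hj; omega)).1).const_mul _
    · refine sumZ _ _ (fun j hj => by
        rw [hswap0]
        exact ((APP1 ((i : ℤ) - j) (i : ℤ) (by omega) (by omega)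
          (by have := hone j hj; omega)).1).const_mul _) ?_
      intro j hj
      rw [hswap0]
      exact cZ _ _ (APP1 ((i : ℤ) - j) (i : ℤ) (by omega) (by omega)
        (by have := hone j hj; omega)).2
    · refine sumZ _ _ (fun j hj => by
        rw [hswap0]
        exact ((APP1 (i : ℤ) ((i : ℤ) - j) (by omega) (by omega)
          (by have := hone j hj; omega)).1).const_mul _) ?_
      intro j hj
      rw [hswap0]
      exact cZ _ _ (APP1 (i : ℤ) ((i : ℤ) - j) (by omega) (by omega)
        (by have := hone j hj; omega)).2
end
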